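/- Let y : [0,1] → ℝ be α-Hölder continuous (0 < α < 1) and x : [0,1] → ℝ of bounded variation. Then the Young integral ∫_0^1 x(u) dy(u) exists as a limit of Riemann sums and satisfies |∫_0^1 x(u) dy(u) − x(0)(y(1) − y(0))| ≤ C_α ‖x‖_{BV} ‖y‖_α, where ‖x‖_{BV} is the total variation of x and ‖y‖_α the α-Hölder seminorm of y. -/

import Mathlib

open MeasureTheory Real Filter Set Finset
open scoped ENNReal NNReal

namespace YoungAux

noncomputable def Tsum (x y : ℝ → ℝ) (m : ℕ) (s : ℕ → ℝ) : ℝ :=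
  ∑ i ∈ Finset.range m, y (s (i + 1)) * (x (s (i + 1)) - x (s i))

lemma sum_Ico_telescope (g : ℕ → ℝ) {a b : ℕ} (h : a ≤ b) :
    ∑ i ∈ Finset.Ico a b, (g (i + 1) - g i) = g b - g a := by
  induction b, h using Nat.le_induction with
  | base => simp
  | succ b hab ih => rw [Finset.sum_Ico_succ_top (by omega), ih]; ring

lemma sum_blocks (f : ℕ → ℝ) (c : ℕ → ℕ) (hc : Monotone c) (n : ℕ) :
    ∑ j ∈ Finset.range n, ∑ i ∈ Finset.Ico (c j) (c (j + 1)), f i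
      = ∑ i ∈ Finset.Ico (c 0) (c n), f i := by
  induction n with
  | zero => simp
  | succ n ih =>
      rw [Finset.sum_range_succ, ih, Finset.sum_Ico_consecutive]
      · exact hc (Nat.zero_le n)
      · exact hc (Nat.le_succ n)

lemma holder_abs {Cy α : NNReal} {y : ℝ → ℝ} (hy : HolderOnWith Cy α y (Set.Icc 0 1))
    {a b : ℝ} (ha : a ∈ Set.Icc (0 : ℝ) 1) (hb : b ∈ Set.Icc (0 : ℝ) 1) :
    |y a - y b| ≤ (Cy : ℝ) * |a - b| ^ (α : ℝ) := by
  have h := hy a ha b hb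
  have hfin : (Cy : ℝ≥0∞) * edist a b ^ (α : ℝ) ≠ ⊤ :=
    ENNReal.mul_ne_top ENNReal.coe_ne_top
      (ENNReal.rpow_ne_top_of_nonneg α.coe_nonneg (edist_ne_top a b))
  have h2 := ENNReal.toReal_mono hfin h
  rw [ENNReal.toReal_mul, ← ENNReal.toReal_rpow] at h2
  simpa [edist_dist, ENNReal.toReal_ofReal dist_nonneg, Real.dist_eq] using h2

lemma var_sum_le {x : ℝ → ℝ} (hx : eVariationOn x (Set.Icc 0 1) ≠ ⊤)
    (m : ℕ) {s : ℕ → ℝ} (hs : Monotone s) (hs01 : ∀ i, s i ∈ Set.Icc (0 : ℝ) 1) :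
    ∑ i ∈ Finset.range m, |x (s (i + 1)) - x (s i)|
      ≤ (eVariationOn x (Set.Icc 0 1)).toReal := by
  have h := eVariationOn.sum_le (f := x) (n := m) hs hs01
  have h2 := ENNReal.toReal_mono hx h
  rw [ENNReal.toReal_sum (fun i _ => edist_ne_top _ _)] at h2
  simpa [edist_dist, ENNReal.toReal_ofReal dist_nonneg, Real.dist_eq] using h2

lemma refine_est {x y : ℝ → ℝ} {Cy α : NNReal}
    (hx : eVariationOn x (Set.Icc 0 1) ≠ ⊤)
    (hy : HolderOnWith Cy α y (Set.Icc 0 1))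
    {n m : ℕ} {t s : ℕ → ℝ} {c : ℕ → ℕ}
    (hs : Monotone s) (hs01 : ∀ i, s i ∈ Set.Icc (0 : ℝ) 1)
    (hc : Monotone c) (hc0 : c 0 = 0) (hcn : c n = m)
    (hcomp : ∀ j, s (c j) = t j)
    {δ : ℝ} (hδ0 : 0 ≤ δ) (hδ : ∀ j < n, t (j + 1) - t j ≤ δ) :
    |Tsum x y m s - Tsum x y n t|
      ≤ (Cy : ℝ) * δ ^ (α : ℝ) * (eVariationOn x (Set.Icc 0 1)).toReal := by
  have hts : ∀ j, t j ∈ Set.Icc (0 : ℝ) 1 := fun j => hcomp j ▸ hs01 (c j)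
  have hTs : Tsum x y m s
      = ∑ j ∈ Finset.range n, ∑ i ∈ Finset.Ico (c j) (c (j + 1)),
          y (s (i + 1)) * (x (s (i + 1)) - x (s i)) := by
    rw [Tsum, sum_blocks _ c hc n, hc0, hcn, Finset.range_eq_Ico]
  have hTt : Tsum x y n t
      = ∑ j ∈ Finset.range n, ∑ i ∈ Finset.Ico (c j) (c (j + 1)),
          y (t (j + 1)) * (x (s (i + 1)) - x (s i)) := by
    rw [Tsum]
    refine Finset.sum_congr rfl fun j hj => ?_
    rw [← Finset.mul_sum, sum_Ico_telescope (fun i => x (s i)) (hc (Nat.le_succ j)),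
      hcomp, hcomp]
  have hcomb : ∀ j ∈ Finset.range n,
      ((∑ i ∈ Finset.Ico (c j) (c (j + 1)), y (s (i + 1)) * (x (s (i + 1)) - x (s i)))
        - ∑ i ∈ Finset.Ico (c j) (c (j + 1)), y (t (j + 1)) * (x (s (i + 1)) - x (s i)))
      = ∑ i ∈ Finset.Ico (c j) (c (j + 1)),
          (y (s (i + 1)) - y (t (j + 1))) * (x (s (i + 1)) - x (s i)) := by
    intro j hj
    rw [← Finset.sum_sub_distrib]
    exact Finset.sum_congr rfl fun i _ => by ring
  rw [hTs, hTt, ← Finset.sum_sub_distrib, Finset.sum_congr rfl hcomb]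
  have key : ∀ j ∈ Finset.range n, ∀ i ∈ Finset.Ico (c j) (c (j + 1)),
      |(y (s (i + 1)) - y (t (j + 1))) * (x (s (i + 1)) - x (s i))|
        ≤ ((Cy : ℝ) * δ ^ (α : ℝ)) * |x (s (i + 1)) - x (s i)| := by
    intro j hj i hi
    have hjn : j < n := Finset.mem_range.1 hj
    obtain ⟨hi1, hi2⟩ := Finset.mem_Ico.1 hi
    have h1 : s (i + 1) ≤ t (j + 1) := by rw [← hcomp]; exact hs hi2
    have h2 : t j ≤ s (i + 1) := by rw [← hcomp]; exact hs (by omega)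
    have hle : |s (i + 1) - t (j + 1)| ≤ δ := by
      rw [abs_sub_comm, abs_of_nonneg (by linarith)]
      have := hδ j hjn; linarith
    rw [abs_mul]
    refine mul_le_mul ?_ le_rfl (abs_nonneg _) (by positivity)
    refine (holder_abs hy (hs01 _) (hts (j + 1))).trans ?_
    exact mul_le_mul_of_nonneg_left
      (Real.rpow_le_rpow (abs_nonneg _) hle α.coe_nonneg) Cy.coe_nonneg
  calc |∑ j ∈ Finset.range n, ∑ i ∈ Finset.Ico (c j) (c (j + 1)),
        (y (s (i + 1)) - y (t (j + 1))) * (x (s (i + 1)) - x (s i))|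
      ≤ ∑ j ∈ Finset.range n, ∑ i ∈ Finset.Ico (c j) (c (j + 1)),
          ((Cy : ℝ) * δ ^ (α : ℝ)) * |x (s (i + 1)) - x (s i)| := by
        refine (Finset.abs_sum_le_sum_abs _ _).trans (Finset.sum_le_sum fun j hj => ?_)
        exact (Finset.abs_sum_le_sum_abs _ _).trans (Finset.sum_le_sum (key j hj))
    _ = ((Cy : ℝ) * δ ^ (α : ℝ)) *
          ∑ j ∈ Finset.range n, ∑ i ∈ Finset.Ico (c j) (c (j + 1)), |x (s (i + 1)) - x (s i)| := by
        simp [Finset.mul_sum]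
    _ ≤ ((Cy : ℝ) * δ ^ (α : ℝ)) * (eVariationOn x (Set.Icc 0 1)).toReal := by
        refine mul_le_mul_of_nonneg_left ?_ (by positivity)
        rw [sum_blocks _ c hc n, hc0, hcn, ← Finset.range_eq_Ico]
        exact var_sum_le hx m hs hs01

lemma exists_refinement {n m : ℕ} {t s : ℕ → ℝ}
    (ht : Monotone t) (hs : Monotone s)
    (ht01 : ∀ j, t j ∈ Set.Icc (0 : ℝ) 1) (hs01 : ∀ i, s i ∈ Set.Icc (0 : ℝ) 1)
    (ht0 : t 0 = 0) (htn : t n = 1) (hs0 : s 0 = 0) (hsm : s m = 1)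
    (htop : ∀ j, n ≤ j → t j = 1) (hstop : ∀ i, m ≤ i → s i = 1) :
    ∃ (p : ℕ) (u : ℕ → ℝ) (a b : ℕ → ℕ),
      Monotone u ∧ (∀ i, u i ∈ Set.Icc (0 : ℝ) 1) ∧
      Monotone a ∧ a 0 = 0 ∧ a n = p ∧ (∀ j, u (a j) = t j) ∧
      Monotone b ∧ b 0 = 0 ∧ b m = p ∧ (∀ i, u (b i) = s i) := by
  classical
  set A : Finset ℝ := (Finset.range (n + 1)).image t ∪ (Finset.range (m + 1)).image s with hA
  set l : List ℝ := A.sort (· ≤ ·) with hl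
  have hlsorted : l.Pairwise (· ≤ ·) := Finset.pairwise_sort _ _
  have hlslt : l.Pairwise (· < ·) := (Finset.sortedLT_sort _).pairwise
  have hmem : ∀ r : ℝ, r ∈ l ↔ r ∈ A := fun r => Finset.mem_sort _
  have htA : ∀ j, t j ∈ A := by
    intro j
    rcases le_or_gt j n with h | h
    · exact Finset.mem_union_left _ (Finset.mem_image.2 ⟨j, Finset.mem_range.2 (by omega), rfl⟩)
    · rw [htop j h.le]
      exact Finset.mem_union_left _ (Finset.mem_image.2 ⟨n, Finset.mem_range.2 (by omega), htn⟩)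
  have hsA : ∀ i, s i ∈ A := by
    intro i
    rcases le_or_gt i m with h | h
    · exact Finset.mem_union_right _ (Finset.mem_image.2 ⟨i, Finset.mem_range.2 (by omega), rfl⟩)
    · rw [hstop i h.le]
      exact Finset.mem_union_right _ (Finset.mem_image.2 ⟨m, Finset.mem_range.2 (by omega), hsm⟩)
  have hA01 : ∀ r ∈ A, r ∈ Set.Icc (0 : ℝ) 1 := by
    intro r hr
    rcases Finset.mem_union.1 hr with h | h
    · obtain ⟨j, -, rfl⟩ := Finset.mem_image.1 h; exact ht01 j
    · obtain ⟨j, -, rfl⟩ := Finset.mem_image.1 h; exact hs01 j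
  have h0l : (0 : ℝ) ∈ l := (hmem 0).2 (ht0 ▸ htA 0)
  have h1l : (1 : ℝ) ∈ l := (hmem 1).2 (htn ▸ htA n)
  have hlen : 0 < l.length := List.length_pos_iff.2 (List.ne_nil_of_mem h0l)
  set p : ℕ := l.length - 1 with hp
  set u : ℕ → ℝ := fun i => l.getD i 1 with hu
  have hudef : ∀ i, l.length ≤ i → u i = 1 := fun i h => List.getD_eq_default _ _ h
  have huget : ∀ i (h : i < l.length), u i = l.get ⟨i, h⟩ := fun i h => List.getD_eq_get _ _ ⟨i, h⟩
  have hgetA : ∀ i (h : i < l.length), u i ∈ A := fun i h => by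
    rw [huget i h]; exact (hmem _).1 (l.get_mem _)
  have humono : Monotone u := by
    intro i j hij
    by_cases hjl : j < l.length
    · have hil : i < l.length := lt_of_le_of_lt hij hjl
      rw [huget i hil, huget j hjl]
      exact hlsorted.rel_get_of_le (by simpa using hij)
    · by_cases hil : i < l.length
      · rw [huget i hil, hudef j (le_of_not_gt hjl)]
        have := (hA01 _ (hgetA i hil)).2
        rwa [huget i hil] at this
      · rw [hudef i (le_of_not_gt hil), hudef j (le_of_not_gt hjl)]
  have hstrict : ∀ {i j : ℕ}, i < j → j < l.length → u i < u j := by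
    intro i j hij hjl
    have hil : i < l.length := lt_trans hij hjl
    rw [huget i hil, huget j hjl]
    exact hlslt.rel_get_of_lt (by simpa using hij)
  have hu01 : ∀ i, u i ∈ Set.Icc (0 : ℝ) 1 := by
    intro i
    by_cases h : i < l.length
    · exact hA01 _ (hgetA i h)
    · rw [hudef i (le_of_not_gt h)]; exact ⟨by norm_num, le_rfl⟩
  have hidx : ∀ r ∈ A, l.idxOf r < l.length ∧ u (l.idxOf r) = r := by
    intro r hr
    have hrl : r ∈ l := (hmem r).2 hr
    have hlt : l.idxOf r < l.length := List.idxOf_lt_length_iff.2 hrl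
    refine ⟨hlt, ?_⟩
    rw [huget _ hlt]
    simp only [List.get_eq_getElem]
    exact List.getElem_idxOf hlt
  have himono : ∀ {v w : ℝ}, v ∈ A → w ∈ A → v ≤ w → l.idxOf v ≤ l.idxOf w := by
    intro v w hv hw hvw
    by_contra hcon
    push_neg at hcon
    have := hstrict hcon (hidx v hv).1
    rw [(hidx v hv).2, (hidx w hw).2] at this
    linarith
  have hu0 : u 0 = 0 := by
    have h1 : u 0 ≤ u (l.idxOf 0) := humono (Nat.zero_le _)
    rw [(hidx 0 (ht0 ▸ htA 0)).2] at h1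
    exact le_antisymm h1 (hA01 _ (hgetA 0 hlen)).1
  have hup : u p = 1 := by
    have hplen : p < l.length := by omega
    have hiplt := (hidx 1 (htn ▸ htA n)).1
    have h1 : u (l.idxOf 1) ≤ u p := humono (by omega)
    rw [(hidx 1 (htn ▸ htA n)).2] at h1
    exact le_antisymm (hA01 _ (hgetA p hplen)).2 h1
  have hzero : ∀ r ∈ A, r = 0 → l.idxOf r = 0 := by
    intro r hr hr0
    subst hr0
    by_contra hcon
    have := hstrict (Nat.pos_of_ne_zero hcon) (hidx 0 (ht0 ▸ htA 0)).1
    rw [(hidx 0 (ht0 ▸ htA 0)).2, hu0] at this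
    linarith
  have hone : ∀ r ∈ A, r = 1 → l.idxOf r = p := by
    intro r hr hr1
    subst hr1
    have hle : l.idxOf 1 ≤ p := by have := (hidx 1 (htn ▸ htA n)).1; omega
    rcases lt_or_eq_of_le hle with hlt | heq
    · exfalso
      have := hstrict hlt (by omega : p < l.length)
      rw [(hidx 1 (htn ▸ htA n)).2, hup] at this
      linarith
    · exact heq
  refine ⟨p, u, fun j => l.idxOf (t j), fun i => l.idxOf (s i),
    humono, hu01, ?_, ?_, ?_, fun j => (hidx _ (htA j)).2, ?_, ?_, ?_, fun i => (hidx _ (hsA i)).2⟩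
  · exact fun i j hij => himono (htA i) (htA j) (ht hij)
  · exact hzero _ (htA 0) ht0
  · exact hone _ (htA n) htn
  · exact fun i j hij => himono (hsA i) (hsA j) (hs hij)
  · exact hzero _ (hsA 0) hs0
  · exact hone _ (hsA m) hsm

end YoungAux

/-- Young's inequality (Young 1936): for `0 < α < 1` there is a constant `C_α` such that for
every `x : [0,1] → ℝ` of bounded variation and every `α`-Hölder `y : [0,1] → ℝ` (with Hölder
constant `C_y`), the Young integral `∫_0^1 x dy` exists as the limit of Riemann sums along
every sequence of partitions with mesh tending to zero, and
`|∫_0^1 x dy − x(0)(y(1) − y(0))| ≤ C_α ‖x‖_BV C_y`. -/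
theorem stmt15 (α : NNReal) (hα0 : 0 < α) (hα1 : α < 1) :
    ∃ C : ℝ, 0 < C ∧
      ∀ (x y : ℝ → ℝ) (Cy : NNReal),
        eVariationOn x (Set.Icc 0 1) ≠ ⊤ →
        HolderOnWith Cy α y (Set.Icc 0 1) →
        ∃ I : ℝ,
          (∀ (K : ℕ → ℕ) (tt : (n : ℕ) → Fin (K n + 1) → ℝ),
            (∀ n, tt n 0 = 0) → (∀ n, tt n (Fin.last (K n)) = 1) →
            (∀ n, Monotone (tt n)) → (∀ n k, tt n k ∈ Set.Icc (0 : ℝ) 1) →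
            Tendsto (fun n => ⨆ k : Fin (K n), (tt n k.succ - tt n k.castSucc))
              atTop (nhds 0) →
            Tendsto (fun n => ∑ k : Fin (K n),
              x (tt n k.castSucc) * (y (tt n k.succ) - y (tt n k.castSucc)))
              atTop (nhds I)) ∧
          |I - x 0 * (y 1 - y 0)| ≤ C * (eVariationOn x (Set.Icc 0 1)).toReal * Cy := by
  have hα0' : 0 < (α : ℝ) := by exact_mod_cast hα0
  refine ⟨1, one_pos, ?_⟩
  intro x y Cy hx hy
  set V : ℝ := (eVariationOn x (Set.Icc 0 1)).toReal with hV
  have hV0 : 0 ≤ V := ENNReal.toReal_nonneg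
  -- two-partition estimate via common refinement
  have twopart : ∀ (n : ℕ) (t : ℕ → ℝ) (m : ℕ) (s : ℕ → ℝ),
      Monotone t → (∀ j, t j ∈ Set.Icc (0:ℝ) 1) → t 0 = 0 → t n = 1 → (∀ j, n ≤ j → t j = 1) →
      Monotone s → (∀ i, s i ∈ Set.Icc (0:ℝ) 1) → s 0 = 0 → s m = 1 → (∀ i, m ≤ i → s i = 1) →
      ∀ δ ε : ℝ, 0 ≤ δ → 0 ≤ ε →
        (∀ j < n, t (j+1) - t j ≤ δ) → (∀ i < m, s (i+1) - s i ≤ ε) →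
      |YoungAux.Tsum x y n t - YoungAux.Tsum x y m s|
        ≤ (Cy:ℝ) * δ ^ (α:ℝ) * V + (Cy:ℝ) * ε ^ (α:ℝ) * V := by
    intro n t m s ht ht01 ht0 htn httop hs hs01 hs0 hsm hstop δ ε hδ0 hε0 hδ hε
    obtain ⟨p, u, a, b, humono, hu01, hamono, ha0, han, hua, hbmono, hb0, hbm, hub⟩ :=
      YoungAux.exists_refinement ht hs ht01 hs01 ht0 htn hs0 hsm httop hstop
    have h1 := YoungAux.refine_est hx hy humono hu01 hamono ha0 han hua hδ0 hδ
    have h2 := YoungAux.refine_est hx hy humono hu01 hbmono hb0 hbm hub hε0 hε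
    have htri := abs_sub_le (YoungAux.Tsum x y n t) (YoungAux.Tsum x y p u) (YoungAux.Tsum x y m s)
    rw [abs_sub_comm (YoungAux.Tsum x y n t) (YoungAux.Tsum x y p u)] at htri
    rw [← hV] at h1 h2
    linarith [abs_sub_comm (YoungAux.Tsum x y p u) (YoungAux.Tsum x y m s)]
  -- dyadic partitions
  set d : ℕ → ℕ → ℝ := fun N j => min ((j:ℝ)/2^N) 1 with hd
  have h2pos : ∀ N : ℕ, (0:ℝ) < 2^N := fun N => by positivity
  have hdmono : ∀ N, Monotone (d N) := by
    intro N i j hij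
    refine min_le_min ?_ le_rfl
    gcongr <;> exact_mod_cast hij
  have hd01 : ∀ N j, d N j ∈ Set.Icc (0:ℝ) 1 :=
    fun N j => ⟨le_min (by positivity) zero_le_one, min_le_right _ _⟩
  have hd0 : ∀ N, d N 0 = 0 := by
    intro N; simp [hd]
  have hdtop : ∀ N j, 2^N ≤ j → d N j = 1 := by
    intro N j h
    refine min_eq_right ?_
    rw [le_div_iff₀ (h2pos N)]
    have : ((2:ℝ)^N) ≤ (j:ℝ) := by exact_mod_cast h
    linarith
  have hdN : ∀ N, d N (2^N) = 1 := fun N => hdtop N _ le_rfl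
  have hdmesh : ∀ N, ∀ j < 2^N, d N (j+1) - d N j ≤ ((2:ℝ)^N)⁻¹ := by
    intro N j _
    have e1 : d N (j+1) ≤ ((j:ℝ)+1)/2^N := by
      refine (min_le_left _ _).trans_eq ?_
      push_cast; ring
    rcases le_total ((j:ℝ)/2^N) 1 with h | h
    · have e2 : d N j = (j:ℝ)/2^N := min_eq_left h
      have e3 : ((j:ℝ)+1)/2^N - (j:ℝ)/2^N = ((2:ℝ)^N)⁻¹ := by
        field_simp
        ring
      rw [e2]; linarith
    · have e2 : d N j = 1 := min_eq_right h
      have e3 : d N (j+1) ≤ 1 := min_le_right _ _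
      have e4 : (0:ℝ) ≤ ((2:ℝ)^N)⁻¹ := by positivity
      rw [e2]; linarith
  set f : ℕ → ℝ := fun N => YoungAux.Tsum x y (2^N) (d N) with hf
  set ρ : ℝ := (2:ℝ)⁻¹ ^ (α:ℝ) with hρ
  have hρ0 : 0 ≤ ρ := Real.rpow_nonneg (by norm_num) _
  have hρ1 : ρ < 1 := Real.rpow_lt_one (by norm_num) (by norm_num) hα0'
  have hgeom : ∀ N : ℕ, ((2:ℝ)^N)⁻¹ ^ (α:ℝ) = ρ^N := by
    intro N
    rw [← inv_pow, ← Real.rpow_natCast ((2:ℝ)⁻¹) N, ← Real.rpow_mul (by norm_num),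
      mul_comm, Real.rpow_mul (by norm_num), Real.rpow_natCast]
  have hbnd : ∀ N M : ℕ, dist (f N) (f M) ≤ (Cy:ℝ)*V*ρ^N + (Cy:ℝ)*V*ρ^M := by
    intro N M
    have := twopart (2^N) (d N) (2^M) (d M) (hdmono N) (hd01 N) (hd0 N) (hdN N) (hdtop N)
      (hdmono M) (hd01 M) (hd0 M) (hdN M) (hdtop M)
      (((2:ℝ)^N)⁻¹) (((2:ℝ)^M)⁻¹) (by positivity) (by positivity) (hdmesh N) (hdmesh M)
    rw [hgeom, hgeom] at this
    rw [Real.dist_eq]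
    calc |f N - f M| ≤ (Cy:ℝ) * ρ^N * V + (Cy:ℝ) * ρ^M * V := this
      _ = (Cy:ℝ)*V*ρ^N + (Cy:ℝ)*V*ρ^M := by ring
  have htend0 : Tendsto (fun N => (Cy:ℝ)*V*ρ^N) atTop (nhds 0) := by
    simpa using (tendsto_pow_atTop_nhds_zero_of_lt_one hρ0 hρ1).const_mul ((Cy:ℝ)*V)
  have hcauchy : CauchySeq f := by
    refine cauchySeq_of_le_tendsto_0 (fun N => 2*((Cy:ℝ)*V*ρ^N)) ?_ ?_
    · intro n m N hn hm
      show dist (f n) (f m) ≤ 2*((Cy:ℝ)*V*ρ^N)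
      refine (hbnd n m).trans ?_
      have e1 : ρ^n ≤ ρ^N := pow_le_pow_of_le_one hρ0 hρ1.le hn
      have e2 : ρ^m ≤ ρ^N := pow_le_pow_of_le_one hρ0 hρ1.le hm
      have hCyV : 0 ≤ (Cy:ℝ)*V := by positivity
      linarith [mul_le_mul_of_nonneg_left e1 hCyV, mul_le_mul_of_nonneg_left e2 hCyV]
    · simpa using htend0.const_mul 2
  obtain ⟨J, hJ⟩ := cauchySeq_tendsto_of_complete hcauchy
  -- key estimate: any partition of mesh ≤ δ has Tsum within Cy δ^α V of J
  have key : ∀ (n : ℕ) (t : ℕ → ℝ), Monotone t → (∀ j, t j ∈ Set.Icc (0:ℝ) 1) →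
      t 0 = 0 → t n = 1 → (∀ j, n ≤ j → t j = 1) →
      ∀ δ : ℝ, 0 ≤ δ → (∀ j < n, t (j+1) - t j ≤ δ) →
      |YoungAux.Tsum x y n t - J| ≤ (Cy:ℝ) * δ ^ (α:ℝ) * V := by
    intro n t ht ht01 ht0 htn httop δ hδ0 hδ
    refine le_of_forall_pos_le_add fun ε hε => ?_
    have hev1 : ∀ᶠ N in atTop, (Cy:ℝ)*V*ρ^N < ε/2 :=
      htend0.eventually (gt_mem_nhds (by linarith))
    have hev2 : ∀ᶠ N in atTop, dist (f N) J < ε/2 :=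
      Metric.tendsto_atTop.1 hJ (ε/2) (by linarith) |>.choose_spec |> fun h => by
        exact Filter.eventually_atTop.2 ⟨_, h⟩
    obtain ⟨N, hN1, hN2⟩ := (hev1.and hev2).exists
    have h1 := twopart n t (2^N) (d N) ht ht01 ht0 htn httop
      (hdmono N) (hd01 N) (hd0 N) (hdN N) (hdtop N)
      δ (((2:ℝ)^N)⁻¹) hδ0 (by positivity) hδ (hdmesh N)
    rw [hgeom] at h1
    have htri := abs_sub_le (YoungAux.Tsum x y n t) (f N) J
    rw [Real.dist_eq] at hN2
    have : (Cy:ℝ) * ρ^N * V = (Cy:ℝ)*V*ρ^N := by ring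
    rw [this] at h1
    linarith
  refine ⟨x 1 * y 1 - x 0 * y 0 - J, ?_, ?_⟩
  · -- convergence of Riemann sums
    intro K tt h0 h1 hmono hmem hmesh
    have hKpos : ∀ n, 0 < K n := by
      intro n
      rcases Nat.eq_zero_or_pos (K n) with h | h
      · exfalso
        have e1 := h0 n
        have e2 := h1 n
        have e3 : Fin.last (K n) = (0 : Fin (K n + 1)) := Fin.ext (by simp [h])
        rw [e3, e1] at e2
        norm_num at e2
      · exact h
    set T : (n : ℕ) → ℕ → ℝ := fun n j => tt n ⟨min j (K n), by omega⟩ with hT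
    have hTmono : ∀ n, Monotone (T n) := by
      intro n i j hij
      exact hmono n (by simp [Fin.mk_le_mk]; omega)
    have hT01 : ∀ n j, T n j ∈ Set.Icc (0:ℝ) 1 := fun n j => hmem n _
    have hT0 : ∀ n, T n 0 = 0 := by
      intro n
      have e : (⟨min 0 (K n), by omega⟩ : Fin (K n + 1)) = 0 := Fin.ext (by simp)
      rw [hT]; simpa [e] using h0 n
    have hTN : ∀ n, T n (K n) = 1 := by
      intro n
      have e : (⟨min (K n) (K n), by omega⟩ : Fin (K n + 1)) = Fin.last (K n) :=
        Fin.ext (by simp)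
      show tt n ⟨min (K n) (K n), by omega⟩ = 1
      rw [e]; exact h1 n
    have hTtop : ∀ n j, K n ≤ j → T n j = 1 := by
      intro n j hj
      have e : (⟨min j (K n), by omega⟩ : Fin (K n + 1)) = Fin.last (K n) :=
        Fin.ext (by simp; omega)
      rw [hT]; simpa [e] using h1 n
    set δseq : ℕ → ℝ := fun n => ⨆ k : Fin (K n), (tt n k.succ - tt n k.castSucc) with hδseq
    have hgap : ∀ n (k : Fin (K n)), tt n k.succ - tt n k.castSucc ≤ δseq n := by
      intro n k
      exact le_ciSup (f := fun k : Fin (K n) => tt n k.succ - tt n k.castSucc)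
        (Set.Finite.bddAbove (Set.finite_range _)) k
    have hδ0 : ∀ n, 0 ≤ δseq n := by
      intro n
      have k0 : Fin (K n) := ⟨0, hKpos n⟩
      refine le_trans ?_ (hgap n k0)
      exact sub_nonneg.2 (hmono n (Fin.castSucc_le_succ k0))
    have hTmesh : ∀ n, ∀ j < K n, T n (j+1) - T n j ≤ δseq n := by
      intro n j hj
      have e1 : T n (j+1) = tt n (⟨j, hj⟩ : Fin (K n)).succ := by
        rw [hT]
        refine congrArg (tt n) (Fin.ext ?_)
        show min (j+1) (K n) = ((⟨j, hj⟩ : Fin (K n)).succ : ℕ)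
        rw [Fin.val_succ]
        simp only [Fin.val_mk]
        omega
      have e2 : T n j = tt n (⟨j, hj⟩ : Fin (K n)).castSucc := by
        rw [hT]
        refine congrArg (tt n) (Fin.ext ?_)
        show min j (K n) = (((⟨j, hj⟩ : Fin (K n)).castSucc) : ℕ)
        rw [Fin.coe_castSucc]
        simp only [Fin.val_mk]
        omega
      rw [e1, e2]
      exact hgap n ⟨j, hj⟩
    have hsum : ∀ n, (∑ k : Fin (K n),
        x (tt n k.castSucc) * (y (tt n k.succ) - y (tt n k.castSucc)))
        = x 1 * y 1 - x 0 * y 0 - YoungAux.Tsum x y (K n) (T n) := by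
      intro n
      have e : ∀ k : Fin (K n), x (tt n k.castSucc) * (y (tt n k.succ) - y (tt n k.castSucc))
          = x (T n k) * (y (T n ((k:ℕ)+1)) - y (T n k)) := by
        intro k
        have hk : (k:ℕ) < K n := k.isLt
        have e1 : T n ((k:ℕ)+1) = tt n k.succ := by
          rw [hT]
          refine congrArg (tt n) (Fin.ext ?_)
          show min ((k:ℕ)+1) (K n) = (k.succ : ℕ)
          rw [Fin.val_succ]
          omega
        have e2 : T n (k:ℕ) = tt n k.castSucc := by
          rw [hT]
          refine congrArg (tt n) (Fin.ext ?_)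
          show min (k:ℕ) (K n) = (k.castSucc : ℕ)
          rw [Fin.coe_castSucc]
          omega
        rw [e1, e2]
      rw [Finset.sum_congr rfl (fun k _ => e k)]
      rw [Fin.sum_univ_eq_sum_range (fun j => x (T n j) * (y (T n (j+1)) - y (T n j))) (K n)]
      have e5 : ∀ j ∈ Finset.range (K n), x (T n j) * (y (T n (j+1)) - y (T n j))
          = (x (T n (j+1)) * y (T n (j+1)) - x (T n j) * y (T n j))
            - y (T n (j+1)) * (x (T n (j+1)) - x (T n j)) := fun j _ => by ring
      rw [Finset.sum_congr rfl e5, Finset.sum_sub_distrib,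
        Finset.sum_range_sub (fun j => x (T n j) * y (T n j))]
      rw [hTN n, hT0 n, YoungAux.Tsum]
    have hTs : Tendsto (fun n => YoungAux.Tsum x y (K n) (T n)) atTop (nhds J) := by
      rw [tendsto_iff_dist_tendsto_zero]
      have hbound : ∀ n, dist (YoungAux.Tsum x y (K n) (T n)) J
          ≤ (Cy:ℝ) * (δseq n) ^ (α:ℝ) * V := by
        intro n
        rw [Real.dist_eq]
        exact key (K n) (T n) (hTmono n) (hT01 n) (hT0 n) (hTN n) (hTtop n)
          (δseq n) (hδ0 n) (hTmesh n)
      refine squeeze_zero (fun n => dist_nonneg) hbound ?_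
      have h1 : Tendsto (fun n => (δseq n)^(α:ℝ)) atTop (nhds 0) := by
        have hc : ContinuousAt (fun z : ℝ => z ^ (α:ℝ)) 0 :=
          Real.continuousAt_rpow_const 0 _ (Or.inr α.coe_nonneg)
        have := hc.tendsto.comp hmesh
        simpa [Function.comp_def, Real.zero_rpow (ne_of_gt hα0')] using this
      have := (h1.const_mul (Cy:ℝ)).mul_const V
      simpa using this
    have : Tendsto (fun n => x 1 * y 1 - x 0 * y 0 - YoungAux.Tsum x y (K n) (T n))
        atTop (nhds (x 1 * y 1 - x 0 * y 0 - J)) := tendsto_const_nhds.sub hTs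
    refine Tendsto.congr (fun n => (hsum n).symm) this
  · -- the bound
    set t1 : ℕ → ℝ := fun j => if j = 0 then 0 else 1 with ht1
    have ht1mono : Monotone t1 := by
      intro a b hab
      by_cases ha : a = 0
      · by_cases hb : b = 0 <;> simp [ht1, ha, hb]
      · have hb : b ≠ 0 := by omega
        simp [ht1, ha, hb]
    have ht101 : ∀ j, t1 j ∈ Set.Icc (0:ℝ) 1 := by
      intro j
      by_cases h : j = 0 <;> simp [ht1, h]
    have ht10 : t1 0 = 0 := by simp [ht1]
    have ht11 : t1 1 = 1 := by simp [ht1]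
    have ht1top : ∀ j, 1 ≤ j → t1 j = 1 := by
      intro j hj
      have : j ≠ 0 := by omega
      simp [ht1, this]
    have ht1mesh : ∀ j < 1, t1 (j+1) - t1 j ≤ (1:ℝ) := by
      intro j hj
      have : j = 0 := by omega
      subst this
      norm_num [ht1]
    have hTriv : YoungAux.Tsum x y 1 t1 = y 1 * (x 1 - x 0) := by
      simp [YoungAux.Tsum, ht1]
    have hb := key 1 t1 ht1mono ht101 ht10 ht11 ht1top 1 zero_le_one ht1mesh
    rw [hTriv, Real.one_rpow] at hb
    have e : (x 1 * y 1 - x 0 * y 0 - J) - x 0 * (y 1 - y 0) = y 1 * (x 1 - x 0) - J := by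
      ring
    rw [e]
    calc |y 1 * (x 1 - x 0) - J| ≤ (Cy:ℝ) * 1 * V := hb
      _ = 1 * V * (Cy:ℝ) := by ring
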